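/- Let k_1,…,k_r: ℝ^d × ℝ^d → ℝ be twice continuously differentiable and k = ∏_{i=1}^r k_i. Then G[k] = ∑_{i=1}^r p_i·G[k_i] + J_x[k]ᵀ P J_y[k], where p_i = ∏_{j≠i} k_j, J_x[k] is the r×d Jacobian whose i-th row is (∇_x k_i)ᵀ, similarly J_y[k], and P ∈ ℝ^{r×r} has entries P_{ij} = ∏_{t≠i,j} k_t for i≠j and P_{ii} = 0. -/

import Mathlib

open Matrix BigOperators

/-- Partial derivative of `f` with respect to the `i`-th coordinate at `x`. -/
noncomputable def pd {n : ℕ} (i : Fin n) (f : (Fin n → ℝ) → ℝ) (x : Fin n → ℝ) : ℝ :=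
  deriv (fun t : ℝ => f (x + t • (Pi.single i 1 : Fin n → ℝ))) 0

/-- The matrix `G[k](x,y)` with entries `∂_{x_i} ∂_{y_j} k (x, y)`. -/
noncomputable def Gmat {n : ℕ} (k : (Fin n → ℝ) → (Fin n → ℝ) → ℝ) (x y : Fin n → ℝ) :
    Matrix (Fin n) (Fin n) ℝ :=
  Matrix.of fun i j => pd i (fun x' => pd j (fun y' => k x' y') y) x

/-- Gradient of `k` with respect to the first argument. -/
noncomputable def gradx {n : ℕ} (k : (Fin n → ℝ) → (Fin n → ℝ) → ℝ) (x y : Fin n → ℝ) :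
    Fin n → ℝ :=
  fun i => pd i (fun x' => k x' y) x

/-- Gradient of `k` with respect to the second argument. -/
noncomputable def grady {n : ℕ} (k : (Fin n → ℝ) → (Fin n → ℝ) → ℝ) (x y : Fin n → ℝ) :
    Fin n → ℝ :=
  fun j => pd j (fun y' => k x y') y

/-- Derivative along a line through `p` in direction `v`. -/
lemma lineHasDerivAt {G : Type*} [NormedAddCommGroup G] [NormedSpace ℝ G]
    (f : G → ℝ) (p v : G) (hf : DifferentiableAt ℝ f p) :
    HasDerivAt (fun s : ℝ => f (p + s • v)) (fderiv ℝ f p v) 0 := by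
  have hline : HasDerivAt (fun s : ℝ => p + s • v) v 0 := by
    simpa using ((hasDerivAt_id (0 : ℝ)).smul_const v).const_add p
  have h0 : p + (0 : ℝ) • v = p := by simp
  have hf' : HasFDerivAt f (fderiv ℝ f p) (p + (0 : ℝ) • v) := by
    rw [h0]; exact hf.hasFDerivAt
  exact hf'.comp_hasDerivAt 0 hline

lemma hasDerivAt_line_fst {n : ℕ} (f : ((Fin n → ℝ) × (Fin n → ℝ)) → ℝ) (i : Fin n)
    (x y : Fin n → ℝ) (hf : DifferentiableAt ℝ f (x, y)) :
    HasDerivAt (fun s : ℝ => f (x + s • (Pi.single i 1 : Fin n → ℝ), y))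
      (fderiv ℝ f (x, y) (Pi.single i 1, 0)) 0 := by
  have h := lineHasDerivAt f (x, y) ((Pi.single i 1 : Fin n → ℝ), (0 : Fin n → ℝ)) hf
  have hfun : (fun s : ℝ => f ((x, y) + s • ((Pi.single i 1 : Fin n → ℝ), (0 : Fin n → ℝ))))
      = fun s : ℝ => f (x + s • (Pi.single i 1 : Fin n → ℝ), y) := by
    funext s; congr 1; simp [Prod.ext_iff]
  rwa [hfun] at h

lemma hasDerivAt_line_snd {n : ℕ} (f : ((Fin n → ℝ) × (Fin n → ℝ)) → ℝ) (j : Fin n)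
    (x y : Fin n → ℝ) (hf : DifferentiableAt ℝ f (x, y)) :
    HasDerivAt (fun s : ℝ => f (x, y + s • (Pi.single j 1 : Fin n → ℝ)))
      (fderiv ℝ f (x, y) (0, Pi.single j 1)) 0 := by
  have h := lineHasDerivAt f (x, y) ((0 : Fin n → ℝ), (Pi.single j 1 : Fin n → ℝ)) hf
  have hfun : (fun s : ℝ => f ((x, y) + s • ((0 : Fin n → ℝ), (Pi.single j 1 : Fin n → ℝ))))
      = fun s : ℝ => f (x, y + s • (Pi.single j 1 : Fin n → ℝ)) := by
    funext s; congr 1; simp [Prod.ext_iff]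
  rwa [hfun] at h

lemma pd_eq_fderiv_fst {n : ℕ} (f : ((Fin n → ℝ) × (Fin n → ℝ)) → ℝ) (i : Fin n)
    (x y : Fin n → ℝ) (hf : DifferentiableAt ℝ f (x, y)) :
    pd i (fun x' => f (x', y)) x = fderiv ℝ f (x, y) (Pi.single i 1, 0) :=
  (hasDerivAt_line_fst f i x y hf).deriv

lemma pd_eq_fderiv_snd {n : ℕ} (f : ((Fin n → ℝ) × (Fin n → ℝ)) → ℝ) (j : Fin n)
    (x y : Fin n → ℝ) (hf : DifferentiableAt ℝ f (x, y)) :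
    pd j (fun y' => f (x, y')) y = fderiv ℝ f (x, y) (0, Pi.single j 1) :=
  (hasDerivAt_line_snd f j x y hf).deriv

/-- For a `C²` function, the map `s ↦ ∂_{y_j} f (x + s eᵢ, y)` is differentiable at `0`
with derivative the mixed partial. -/
lemma hasDerivAt_pd_snd {n : ℕ} (f : ((Fin n → ℝ) × (Fin n → ℝ)) → ℝ)
    (hf : ContDiff ℝ 2 f) (i j : Fin n) (x y : Fin n → ℝ) :
    HasDerivAt
      (fun s : ℝ => fderiv ℝ f (x + s • (Pi.single i 1 : Fin n → ℝ), y)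
        ((0 : Fin n → ℝ), Pi.single j 1))
      (pd i (fun x' => pd j (fun y' => f (x', y')) y) x) 0 := by
  have hfd : Differentiable ℝ f := hf.differentiable two_ne_zero
  set g : ((Fin n → ℝ) × (Fin n → ℝ)) → ℝ :=
    fun p => fderiv ℝ f p ((0 : Fin n → ℝ), Pi.single j 1) with hg
  have hg1 : Differentiable ℝ g := by
    have h1 : ContDiff ℝ 1 (fderiv ℝ f) := hf.fderiv_right (by norm_num)
    exact (h1.differentiable one_ne_zero).clm_apply (differentiable_const _)
  have h := hasDerivAt_line_fst g i x y (hg1 _)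
  have heq : (fun x' => pd j (fun y' => f (x', y')) y) = fun x' => g (x', y) := by
    funext x'
    exact pd_eq_fderiv_snd f j x' y (hfd _)
  have hval : pd i (fun x' => pd j (fun y' => f (x', y')) y) x
      = fderiv ℝ g (x, y) (Pi.single i 1, 0) := by
    rw [heq]
    exact pd_eq_fderiv_fst g i x y (hg1 _)
  rw [hval]
  exact h

lemma sum_erase_eq_sum_ite {α : Type*} [Fintype α] [DecidableEq α] (t : α) (f : α → ℝ) :
    ∑ u ∈ Finset.univ.erase t, f u = ∑ u, if u = t then 0 else f u := by
  rw [← Finset.sum_erase_add Finset.univ (fun u => if u = t then (0 : ℝ) else f u)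
    (Finset.mem_univ t), if_pos rfl, add_zero]
  exact Finset.sum_congr rfl fun u hu => (if_neg (Finset.ne_of_mem_erase hu)).symm

theorem G_product_rule_r (d r : ℕ) (k : Fin r → (Fin d → ℝ) → (Fin d → ℝ) → ℝ)
    (hk : ∀ i, ContDiff ℝ 2 (fun p : (Fin d → ℝ) × (Fin d → ℝ) => k i p.1 p.2))
    (x y : Fin d → ℝ) :
    Gmat (fun x y => ∏ i, k i x y) x y
      = (∑ i, (∏ j ∈ Finset.univ.erase i, k j x y) • Gmat (k i) x y)
        + (Matrix.of fun (i : Fin r) (l : Fin d) => gradx (k i) x y l)ᵀ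
          * (Matrix.of fun i j =>
              if i = j then (0 : ℝ)
              else ∏ t ∈ (Finset.univ.erase i).erase j, k t x y)
          * (Matrix.of fun (i : Fin r) (l : Fin d) => grady (k i) x y l) := by
  classical
  ext i j
  have hdiff : ∀ t, Differentiable ℝ (fun p : (Fin d → ℝ) × (Fin d → ℝ) => k t p.1 p.2) :=
    fun t => (hk t).differentiable two_ne_zero
  set A : Fin r → ℝ → ℝ := fun t s =>
    ∏ u ∈ Finset.univ.erase t, k u (x + s • (Pi.single i 1 : Fin d → ℝ)) y with hAdef
  set B : Fin r → ℝ → ℝ := fun t s =>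
    fderiv ℝ (fun p : (Fin d → ℝ) × (Fin d → ℝ) => k t p.1 p.2)
      (x + s • (Pi.single i 1 : Fin d → ℝ), y) ((0 : Fin d → ℝ), Pi.single j 1) with hBdef
  have hB : ∀ t, HasDerivAt (B t) (Gmat (k t) x y i j) 0 := by
    intro t
    have h := hasDerivAt_pd_snd (fun p : (Fin d → ℝ) × (Fin d → ℝ) => k t p.1 p.2)
      (hk t) i j x y
    simpa [hBdef, Gmat] using h
  have hgx : ∀ u, HasDerivAt (fun s : ℝ => k u (x + s • (Pi.single i 1 : Fin d → ℝ)) y)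
      (gradx (k u) x y i) 0 := by
    intro u
    have h := hasDerivAt_line_fst (fun p : (Fin d → ℝ) × (Fin d → ℝ) => k u p.1 p.2)
      i x y (hdiff u _)
    have hval : gradx (k u) x y i
        = fderiv ℝ (fun p : (Fin d → ℝ) × (Fin d → ℝ) => k u p.1 p.2) (x, y)
          ((Pi.single i 1 : Fin d → ℝ), 0) :=
      pd_eq_fderiv_fst _ i x y (hdiff u _)
    rw [hval]; exact h
  have hgyval : ∀ t, grady (k t) x y j
      = fderiv ℝ (fun p : (Fin d → ℝ) × (Fin d → ℝ) => k t p.1 p.2) (x, y)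
        ((0 : Fin d → ℝ), Pi.single j 1) := fun t =>
    pd_eq_fderiv_snd _ j x y (hdiff t _)
  have hA : ∀ t, HasDerivAt (A t)
      (∑ u ∈ Finset.univ.erase t,
        (∏ v ∈ (Finset.univ.erase t).erase u, k v x y) * gradx (k u) x y i) 0 := by
    intro t
    have h := HasDerivAt.fun_finsetProd (u := Finset.univ.erase t)
      (f := fun u s => k u (x + s • (Pi.single i 1 : Fin d → ℝ)) y)
      (f' := fun u => gradx (k u) x y i) (fun u _ => hgx u)
    simpa [hAdef, smul_eq_mul] using h
  have hinner : ∀ x' : Fin d → ℝ, pd j (fun y' => ∏ t, k t x' y') y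
      = ∑ t, (∏ u ∈ Finset.univ.erase t, k u x' y) *
          fderiv ℝ (fun p : (Fin d → ℝ) × (Fin d → ℝ) => k t p.1 p.2) (x', y)
            ((0 : Fin d → ℝ), Pi.single j 1) := by
    intro x'
    have h := HasDerivAt.fun_finsetProd (u := (Finset.univ : Finset (Fin r)))
      (f := fun t s => k t x' (y + s • (Pi.single j 1 : Fin d → ℝ)))
      (f' := fun t => fderiv ℝ (fun p : (Fin d → ℝ) × (Fin d → ℝ) => k t p.1 p.2) (x', y)
        ((0 : Fin d → ℝ), Pi.single j 1))
      (fun t _ => hasDerivAt_line_snd (fun p : (Fin d → ℝ) × (Fin d → ℝ) => k t p.1 p.2)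
        j x' y (hdiff t _))
    have h2 : pd j (fun y' => ∏ t, k t x' y') y
        = deriv (fun s : ℝ => ∏ t, k t x' (y + s • (Pi.single j 1 : Fin d → ℝ))) 0 := rfl
    rw [h2]
    have h3 := h.deriv
    simpa [smul_eq_mul] using h3
  have houter : Gmat (fun x y => ∏ t, k t x y) x y i j
      = deriv (fun s : ℝ => ∑ t, A t s * B t s) 0 := by
    have hfn : (fun x' => pd j (fun y' => ∏ t, k t x' y') y)
        = fun x' => ∑ t, (∏ u ∈ Finset.univ.erase t, k u x' y) *
            fderiv ℝ (fun p : (Fin d → ℝ) × (Fin d → ℝ) => k t p.1 p.2) (x', y)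
              ((0 : Fin d → ℝ), Pi.single j 1) := funext hinner
    show pd i (fun x' => pd j (fun y' => ∏ t, k t x' y') y) x = _
    rw [hfn]
    rfl
  have hsum : HasDerivAt (fun s : ℝ => ∑ t, A t s * B t s)
      (∑ t, ((∑ u ∈ Finset.univ.erase t,
          (∏ v ∈ (Finset.univ.erase t).erase u, k v x y) * gradx (k u) x y i) * B t 0
        + A t 0 * Gmat (k t) x y i j)) 0 :=
    HasDerivAt.fun_sum fun t _ => (hA t).mul (hB t)
  have hB0 : ∀ t, B t 0 = grady (k t) x y j := by
    intro t
    rw [hgyval t]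
    simp [hBdef]
  have hA0 : ∀ t, A t 0 = ∏ u ∈ Finset.univ.erase t, k u x y := by
    intro t; simp [hAdef]
  have hLHS : Gmat (fun x y => ∏ t, k t x y) x y i j
      = ∑ t, ((∑ u ∈ Finset.univ.erase t,
          (∏ v ∈ (Finset.univ.erase t).erase u, k v x y) * gradx (k u) x y i)
            * grady (k t) x y j
        + (∏ u ∈ Finset.univ.erase t, k u x y) * Gmat (k t) x y i j) := by
    rw [houter, hsum.deriv]
    exact Finset.sum_congr rfl fun t _ => by rw [hB0, hA0]
  rw [hLHS]
  simp only [Matrix.add_apply, Matrix.sum_apply, Matrix.smul_apply, smul_eq_mul,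
    Matrix.mul_apply, Matrix.transpose_apply, Matrix.of_apply]
  rw [Finset.sum_add_distrib, add_comm]
  congr 1
  refine Finset.sum_congr rfl fun t _ => ?_
  congr 1
  rw [sum_erase_eq_sum_ite]
  refine Finset.sum_congr rfl fun u _ => ?_
  by_cases hu : u = t
  · simp [hu]
  · rw [if_neg hu, if_neg hu, Finset.erase_right_comm, mul_comm]
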